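/- Let TA = (L, L₀, ∅, Σ, CX, I, E) be a timed automaton with an empty set of urgent locations, and define f on states by f((l,ν)) = (l,ν) if ν ⊨ I(l) and f((l,ν)) = (l_u, ν) otherwise. Then for every state (l,ν) of TS'(TA): (l,ν) is reachable in TS'(TA) if and only if f((l,ν)) is reachable in TS(INV(TA)). -/

import Mathlib

/-!
Framework for timed automata.  Clock valuations assign non-negative reals to
clocks.  Guards and location invariants are represented semantically, as
predicates on clock valuations.
-/

/-- Clock valuations: each clock gets a non-negative real. -/
abbrev Val (C : Type) := C → NNReal

/-- The valuation `ν₀` assigning `0` to every clock. -/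
def zeroVal {C : Type} : Val C := fun _ => 0

open Classical in
/-- `ν[λ := 0]`: reset the clocks in `lam` to zero. -/
noncomputable def resetVal {C : Type} (ν : Val C) (lam : Set C) : Val C :=
  fun x => if x ∈ lam then 0 else ν x

/-- `ν + δ`: advance every clock by `δ`. -/
def shift {C : Type} (ν : Val C) (δ : NNReal) : Val C := fun x => ν x + δ

/-- A timed automaton `TA = (L, L₀, L_u, Σ, CX, I, E)` with location type `L`,
action alphabet `A` and clock type `C`:  a set of initial locations (nonempty),
a set of urgent locations, an invariant map, and a set of edges
`(l, a, φ, λ, l')` consisting of source, action, guard, reset set and target. -/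
structure TA (L A C : Type) where
  init : Set L
  init_nonempty : init.Nonempty
  urgent : Set L
  inv : L → Val C → Prop
  edges : Set (L × A × (Val C → Prop) × Set C × L)

/-- States of the associated transition systems: location/valuation pairs. -/
abbrev State (L C : Type) := L × Val C

/-- Initial states: initial locations paired with the zero valuation. -/
def TA.initStates {L A C : Type} (T : TA L A C) : Set (State L C) :=
  {p | p.1 ∈ T.init ∧ p.2 = zeroVal}

/-- Baseline semantics `TS(TA)`.  Labels are `Sum.inl a` for actions `a ∈ Σ`
and `Sum.inr δ` for delays `δ ∈ ℝ≥0`.  Action transitions require the target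
invariant to hold; delay transitions require the source location not to be
urgent and the invariant to hold throughout the delay. -/
def TS {L A C : Type} (T : TA L A C) :
    State L C → (A ⊕ NNReal) → State L C → Prop := fun p α q =>
  match α with
  | Sum.inl a => ∃ φ lam, (p.1, a, φ, lam, q.1) ∈ T.edges ∧ φ p.2 ∧
      q.2 = resetVal p.2 lam ∧ T.inv q.1 q.2
  | Sum.inr δ => p.1 ∉ T.urgent ∧ q.1 = p.1 ∧ q.2 = shift p.2 δ ∧
      ∀ k ≤ δ, T.inv p.1 (shift p.2 k)

/-- Unsatisfied-invariants semantics `TS'(TA)`: like `TS(TA)` except action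
transitions do not require the target invariant to hold. -/
def TS' {L A C : Type} (T : TA L A C) :
    State L C → (A ⊕ NNReal) → State L C → Prop := fun p α q =>
  match α with
  | Sum.inl a => ∃ φ lam, (p.1, a, φ, lam, q.1) ∈ T.edges ∧ φ p.2 ∧
      q.2 = resetVal p.2 lam
  | Sum.inr δ => p.1 ∉ T.urgent ∧ q.1 = p.1 ∧ q.2 = shift p.2 δ ∧
      ∀ k ≤ δ, T.inv p.1 (shift p.2 k)

/-- Reachable states: smallest set containing the initial states and closed
under the transition relation. -/
inductive Reachable {S Λ : Type} (init : Set S) (tr : S → Λ → S → Prop) : S → Prop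
  | base {s : S} : s ∈ init → Reachable init tr s
  | step {s : S} {α : Λ} {s' : S} :
      Reachable init tr s → tr s α s' → Reachable init tr s'

/-- The construction `INV(TA)` (for `TA` with no urgent locations).  Locations
are `L ⊕ L`: `Sum.inl l` is the original location `l`, `Sum.inr l` is its fresh
urgent copy `l_u`.  For each original edge `(l, a, φ, λ, l')`, four edges are
introduced, with guards `φ₁ = φ ∧ resetPred(I(l'), λ)` (semantically:
`φ ν ∧ I(l')(ν[λ:=0])`) and `φ₂ = φ ∧ ¬resetPred(I(l'), λ)`. -/
noncomputable def INV {L A C : Type} (T : TA L A C) : TA (L ⊕ L) A C where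
  init := Sum.inl '' {l | l ∈ T.init ∧ T.inv l zeroVal} ∪
          Sum.inr '' {l | l ∈ T.init ∧ ¬ T.inv l zeroVal}
  init_nonempty := by
    obtain ⟨l, hl⟩ := T.init_nonempty
    by_cases h : T.inv l zeroVal
    · exact ⟨Sum.inl l, Set.mem_union_left _ (Set.mem_image_of_mem _ ⟨hl, h⟩)⟩
    · exact ⟨Sum.inr l, Set.mem_union_right _ (Set.mem_image_of_mem _ ⟨hl, h⟩)⟩
  urgent := Set.range Sum.inr
  inv := fun l' ν =>
    match l' with
    | Sum.inl l => T.inv l ν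
    | Sum.inr _ => True
  edges := { e | ∃ l a φ lam l', (l, a, φ, lam, l') ∈ T.edges ∧
      (e = (Sum.inl l, a, fun ν => φ ν ∧ T.inv l' (resetVal ν lam), lam, Sum.inl l') ∨
       e = (Sum.inl l, a, fun ν => φ ν ∧ ¬ T.inv l' (resetVal ν lam), lam, Sum.inr l') ∨
       e = (Sum.inr l, a, fun ν => φ ν ∧ T.inv l' (resetVal ν lam), lam, Sum.inl l') ∨
       e = (Sum.inr l, a, fun ν => φ ν ∧ ¬ T.inv l' (resetVal ν lam), lam, Sum.inr l')) }

open Classical in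
/-- The map `f` on states: `f((l,ν)) = (l,ν)` if `ν ⊨ I(l)`, and
`f((l,ν)) = (l_u, ν)` otherwise. -/
noncomputable def fINV {L A C : Type} (T : TA L A C) :
    State L C → State (L ⊕ L) C := fun p =>
  if T.inv p.1 p.2 then (Sum.inl p.1, p.2) else (Sum.inr p.1, p.2)


lemma shift_zero {C : Type} (ν : Val C) : shift ν 0 = ν := by
  funext x; simp [shift]

lemma fINV_of_inv {L A C : Type} (T : TA L A C) {l : L} {ν : Val C}
    (h : T.inv l ν) : fINV T (l, ν) = (Sum.inl l, ν) := by
  simp [fINV, h]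

lemma fINV_of_not_inv {L A C : Type} (T : TA L A C) {l : L} {ν : Val C}
    (h : ¬ T.inv l ν) : fINV T (l, ν) = (Sum.inr l, ν) := by
  simp [fINV, h]

lemma fINV_inj {L A C : Type} (T : TA L A C) {l l' : L} {ν ν' : Val C}
    (h : fINV T (l, ν) = fINV T (l', ν')) : l = l' ∧ ν = ν' := by
  unfold fINV at h
  split_ifs at h <;> simp only [Prod.mk.injEq, Sum.inl.injEq, Sum.inr.injEq] at h <;>
    first
      | exact h
      | exact absurd h.1 (by simp)

/-- a state `(l,ν)` is reachable in `TS'(TA)` iff `f((l,ν))` is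
reachable in `TS(INV(TA))`. -/
lemma fINV_cases {L A C : Type} (T : TA L A C) {ls : L ⊕ L} {νs : Val C}
    {l : L} {ν : Val C} (h : (ls, νs) = fINV T (l, ν)) :
    νs = ν ∧ ((ls = Sum.inl l ∧ T.inv l ν) ∨ (ls = Sum.inr l ∧ ¬ T.inv l ν)) := by
  unfold fINV at h
  split_ifs at h with hi <;> simp only [Prod.mk.injEq] at h
  · exact ⟨h.2, Or.inl ⟨h.1, hi⟩⟩
  · exact ⟨h.2, Or.inr ⟨h.1, hi⟩⟩

theorem statement_6 {L A C : Type} [Fintype L] [Fintype A] [Fintype C] [Nonempty C]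
    (T : TA L A C) (hu : T.urgent = ∅) :
    ∀ (l : L) (ν : Val C),
      Reachable T.initStates (TS' T) (l, ν) ↔
        Reachable (INV T).initStates (TS (INV T)) (fINV T (l, ν)) := by
  have fwd : ∀ p, Reachable T.initStates (TS' T) p →
      Reachable (INV T).initStates (TS (INV T)) (fINV T p) := by
    intro p hp
    induction hp with
    | @base s h =>
      obtain ⟨ls, νs⟩ := s
      obtain ⟨h1, h2⟩ := h
      simp only at h1 h2
      subst h2
      apply Reachable.base
      by_cases hi : T.inv ls zeroVal
      · rw [fINV_of_inv T hi]
        exact ⟨Set.mem_union_left _ ⟨ls, ⟨h1, hi⟩, rfl⟩, rfl⟩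
      · rw [fINV_of_not_inv T hi]
        exact ⟨Set.mem_union_right _ ⟨ls, ⟨h1, hi⟩, rfl⟩, rfl⟩
    | @step s α q hs htr ih =>
      obtain ⟨ls, νs⟩ := s
      obtain ⟨lq, νq⟩ := q
      match α, htr with
      | Sum.inl a, htr =>
        obtain ⟨φ, lam, hedge, hφ, hq2⟩ := htr
        simp only at hedge hφ hq2
        refine Reachable.step ih (α := Sum.inl a) ?_
        by_cases hi : T.inv ls νs <;> by_cases hj : T.inv lq νq
        · rw [fINV_of_inv T hi, fINV_of_inv T hj]
          exact ⟨_, lam, ⟨ls, a, φ, lam, lq, hedge, Or.inl rfl⟩,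
            ⟨hφ, hq2 ▸ hj⟩, hq2, hj⟩
        · rw [fINV_of_inv T hi, fINV_of_not_inv T hj]
          exact ⟨_, lam, ⟨ls, a, φ, lam, lq, hedge, Or.inr (Or.inl rfl)⟩,
            ⟨hφ, hq2 ▸ hj⟩, hq2, trivial⟩
        · rw [fINV_of_not_inv T hi, fINV_of_inv T hj]
          exact ⟨_, lam, ⟨ls, a, φ, lam, lq, hedge, Or.inr (Or.inr (Or.inl rfl))⟩,
            ⟨hφ, hq2 ▸ hj⟩, hq2, hj⟩
        · rw [fINV_of_not_inv T hi, fINV_of_not_inv T hj]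
          exact ⟨_, lam, ⟨ls, a, φ, lam, lq, hedge, Or.inr (Or.inr (Or.inr rfl))⟩,
            ⟨hφ, hq2 ▸ hj⟩, hq2, trivial⟩
      | Sum.inr δ, htr =>
        obtain ⟨_, hq1, hq2, hall⟩ := htr
        simp only at hq1 hq2 hall
        have hi : T.inv ls νs := by
          have := hall 0 zero_le
          rwa [shift_zero] at this
        have hj : T.inv lq νq := by
          rw [hq1, hq2]; exact hall δ le_rfl
        refine Reachable.step ih (α := Sum.inr δ) ?_
        rw [fINV_of_inv T hi, fINV_of_inv T hj]
        exact ⟨by simp [INV], congrArg Sum.inl hq1, hq2, hall⟩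
  have key : ∀ s, Reachable (INV T).initStates (TS (INV T)) s →
      ∃ l ν, s = fINV T (l, ν) ∧ Reachable T.initStates (TS' T) (l, ν) := by
    intro s hs
    induction hs with
    | @base s h =>
      obtain ⟨ls, νs⟩ := s
      obtain ⟨h1, h2⟩ := h
      simp only at h1 h2
      subst h2
      rcases h1 with ⟨l, ⟨hl, hinv⟩, hs1⟩ | ⟨l, ⟨hl, hinv⟩, hs1⟩
      · exact ⟨l, zeroVal, by rw [fINV_of_inv T hinv, ← hs1],
          Reachable.base ⟨hl, rfl⟩⟩
      · exact ⟨l, zeroVal, by rw [fINV_of_not_inv T hinv, ← hs1],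
          Reachable.base ⟨hl, rfl⟩⟩
    | @step s α q hs htr ih =>
      obtain ⟨ls, νs⟩ := s
      obtain ⟨lq, νq⟩ := q
      obtain ⟨l, ν, hseq, hreach⟩ := ih
      obtain ⟨hν, hls⟩ := fINV_cases T hseq
      subst hν
      match α, htr with
      | Sum.inl a, htr =>
        obtain ⟨φ', lam', hedge, hφ', hq2, hqinv⟩ := htr
        simp only at hφ' hq2
        obtain ⟨l₀, a₀, φ, lam, l', hE, hcases⟩ := hedge
        rcases hls with ⟨hls, hi⟩ | ⟨hls, hi⟩ <;> subst hls <;>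
          rcases hcases with h4 | h4 | h4 | h4 <;>
            simp only [Prod.mk.injEq, Sum.inl.injEq, Sum.inr.injEq,
              reduceCtorEq, false_and, and_false] at h4 <;>
          obtain ⟨e1, e2, e3, e4, e5⟩ := h4 <;>
          subst e1 <;> subst e2 <;> subst e4 <;>
          rw [e3] at hφ' <;>
          (first
            | (refine ⟨l', resetVal νs lam', ?_,
                 Reachable.step hreach (α := Sum.inl a)
                   ⟨φ, lam', hE, hφ'.1, rfl⟩⟩
               rw [fINV_of_inv T hφ'.2]
               exact Prod.ext e5 hq2)
            | (refine ⟨l', resetVal νs lam', ?_,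
                 Reachable.step hreach (α := Sum.inl a)
                   ⟨φ, lam', hE, hφ'.1, rfl⟩⟩
               rw [fINV_of_not_inv T hφ'.2]
               exact Prod.ext e5 hq2))
      | Sum.inr δ, htr =>
        obtain ⟨hnu, hq1, hq2, hall⟩ := htr
        simp only at hnu hq1 hq2 hall
        rcases hls with ⟨hls, hi⟩ | ⟨hls, hi⟩
        · subst hls
          have hall' : ∀ k ≤ δ, T.inv l (shift νs k) := fun k hk => hall k hk
          have hj : T.inv l (shift νs δ) := hall' δ le_rfl
          refine ⟨l, shift νs δ, ?_,
            Reachable.step hreach (α := Sum.inr δ)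
              ⟨by simp [hu], rfl, rfl, hall'⟩⟩
          rw [fINV_of_inv T hj]
          exact Prod.ext (hq1 ▸ rfl) hq2
        · exfalso
          subst hls
          exact hnu ⟨l, rfl⟩
  intro l ν
  constructor
  · intro h; exact fwd _ h
  · intro h
    obtain ⟨l', ν', heq, hr⟩ := key _ h
    obtain ⟨rfl, rfl⟩ := fINV_inj T heq
    exact hr
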